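/- arXiv:1804.04085 — 4 statements merged into one kernel-verified Lean document; each statement's English description precedes it below -/
import Mathlib

section
/- For every real ν ≥ 1 and every q ∈ (1/2, 1), the standard normal quantile is strictly smaller than the Student t quantile with ν degrees of freedom: z_q < t_{ν;q}. (This is the inequality z_{1−α/2} < t_{n−p;1−α/2} used in the proof of Theorem 1.) -/
open Real Set

/-- Standard normal cumulative distribution function. -/
noncomputable def stdNormalCDF (x : ℝ) : ℝ :=
  ∫ t in Set.Iic x, (2 * π) ^ (-(1:ℝ)/2) * Real.exp (-t^2 / 2)

/-- Student t cumulative distribution function with `ν` degrees of freedom. -/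
noncomputable def studentCDF (ν : ℝ) (x : ℝ) : ℝ :=
  ∫ t in Set.Iic x,
    (Real.Gamma ((ν + 1) / 2) / (Real.sqrt (ν * π) * Real.Gamma (ν / 2))) *
      (1 + t ^ 2 / ν) ^ (-((ν + 1) / 2))

/-- Standard normal quantile `z_q`: the (unique) real with `stdNormalCDF z = q`. -/
noncomputable def zQuantile (q : ℝ) : ℝ := Function.invFun stdNormalCDF q

/-- Student t quantile `t_{ν;q}`: the (unique) real with `studentCDF ν t = q`. -/
noncomputable def tQuantile (ν q : ℝ) : ℝ := Function.invFun (studentCDF ν) q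

section Aux
open MeasureTheory Filter

section CDFbasics
variable {g : ℝ → ℝ}

lemma cdf_sub (hi : Integrable g) (a b : ℝ) :
    (∫ t in Iic b, g t) - ∫ t in Iic a, g t = ∫ t in a..b, g t :=
  intervalIntegral.integral_Iic_sub_Iic hi.integrableOn hi.integrableOn

lemma cdf_strictMono (hi : Integrable g) (hp : ∀ t, 0 < g t) :
    StrictMono (fun x => ∫ t in Iic x, g t) := by
  intro a b hab
  have h := cdf_sub hi a b
  have hpos : 0 < ∫ t in a..b, g t :=
    intervalIntegral.intervalIntegral_pos_of_pos_on hi.intervalIntegrable (fun x _ => hp x) hab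
  simp only []
  linarith

lemma cdf_continuous (hi : Integrable g) : Continuous (fun x => ∫ t in Iic x, g t) := by
  have : (fun x => ∫ t in Iic x, g t)
      = fun x => (∫ t in (0:ℝ)..x, g t) + ∫ t in Iic (0:ℝ), g t := by
    funext x
    have := cdf_sub hi 0 x
    linarith
  rw [this]
  exact (hi.continuous_primitive 0).add continuous_const

lemma cdf_tendsto_atTop (hi : Integrable g) :
    Tendsto (fun x => ∫ t in Iic x, g t) atTop (nhds (∫ t, g t)) :=
  (aecover_Iic tendsto_id).integral_tendsto_of_countably_generated hi

lemma even_split (hi : Integrable g) (he : ∀ t, g (-t) = g t) :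
    ∫ t in Iic (0:ℝ), g t = (∫ t, g t) / 2 := by
  have h1 : ∫ t in Ioi (0:ℝ), g t = ∫ t in Iic (0:ℝ), g t := by
    rw [← neg_zero, ← integral_comp_neg_Ioi]
    simp only [he, neg_zero]
  have h2 : (∫ t in Iic (0:ℝ), g t) + ∫ t in Ioi (0:ℝ), g t = ∫ t, g t :=
    intervalIntegral.integral_Iic_add_Ioi hi.integrableOn hi.integrableOn
  linarith

lemma cdf_exists (hi : Integrable g) (hcont : Continuous (fun x => ∫ t in Iic x, g t))
    {q : ℝ} (h0 : (∫ t in Iic (0:ℝ), g t) ≤ q) (h1 : q < ∫ t, g t) :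
    ∃ z, (∫ t in Iic z, g t) = q := by
  obtain ⟨X, hX⟩ := ((cdf_tendsto_atTop hi).eventually (eventually_gt_nhds h1)).exists
  have := intermediate_value_univ (0:ℝ) X hcont
  exact this ⟨h0, hX.le⟩

end CDFbasics

lemma beta_real {u v : ℝ} (hu : 0 < u) (hv : 0 < v) :
    ∫ x in (0:ℝ)..1, x ^ (u-1) * (1-x) ^ (v-1)
      = Real.Gamma u * Real.Gamma v / Real.Gamma (u+v) := by
  have h := Complex.Gamma_mul_Gamma_eq_betaIntegral
    (s := (u:ℂ)) (t := (v:ℂ)) (by simpa using hu) (by simpa using hv)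
  have hbeta : Complex.betaIntegral u v
      = ((∫ x in (0:ℝ)..1, x ^ (u-1) * (1-x) ^ (v-1) : ℝ) : ℂ) := by
    rw [Complex.betaIntegral, ← intervalIntegral.integral_ofReal]
    apply intervalIntegral.integral_congr
    intro x hx
    rw [uIcc_of_le (by norm_num : (0:ℝ) ≤ 1)] at hx
    simp only []
    rw [Complex.ofReal_mul, Complex.ofReal_cpow hx.1, Complex.ofReal_cpow (by linarith [hx.2])]
    push_cast
    ring
  rw [hbeta, ← Complex.ofReal_add, Complex.Gamma_ofReal, Complex.Gamma_ofReal,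
    Complex.Gamma_ofReal] at h
  have h2 : ((Real.Gamma u * Real.Gamma v : ℝ) : ℂ)
      = ((Real.Gamma (u+v) * ∫ x in (0:ℝ)..1, x ^ (u-1) * (1-x) ^ (v-1) : ℝ) : ℂ) := by
    push_cast; exact h
  have h3 := Complex.ofReal_injective h2
  have hG : Real.Gamma (u+v) ≠ 0 := (Real.Gamma_pos_of_pos (by linarith)).ne'
  field_simp
  linarith [h3]

lemma aux_pt {s t : ℝ} (ht : 0 < t) :
    |(-(2*t) / (1+t^2)^2)| * ((1/2) * ((1+t^2)⁻¹ ^ (s-1/2-1)) * ((1 - (1+t^2)⁻¹) ^ ((1/2:ℝ)-1)))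
      = (1+t^2) ^ (-s) := by
  have hP : (0:ℝ) < 1+t^2 := by positivity
  have h1 : 1 - (1+t^2)⁻¹ = t^2 / (1+t^2) := by field_simp; ring
  rw [h1, abs_div, abs_neg, abs_of_pos (by positivity : (0:ℝ) < 2*t),
    abs_of_pos (by positivity : (0:ℝ) < (1+t^2)^2)]
  have hL : (0:ℝ) < 2*t/(1+t^2)^2 * ((1/2) * ((1+t^2)⁻¹ ^ (s-1/2-1)) * ((t^2/(1+t^2)) ^ ((1/2:ℝ)-1))) := by
    positivity
  rw [← Real.exp_log hL, ← Real.exp_log (Real.rpow_pos_of_pos hP (-s))]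
  congr 1
  rw [Real.log_rpow hP, Real.log_mul (by positivity) (by positivity),
    Real.log_mul (by positivity) (by positivity),
    Real.log_div (by positivity) (by positivity),
    Real.log_mul (by norm_num) ht.ne', Real.log_pow,
    Real.log_mul (by norm_num) (by positivity),
    Real.log_rpow (by positivity), Real.log_inv,
    Real.log_rpow (show (0:ℝ) < t^2/(1+t^2) by positivity),
    Real.log_div (show (t:ℝ)^2 ≠ 0 by positivity) (show (1:ℝ)+t^2 ≠ 0 by positivity),
    Real.log_pow, show (1:ℝ)/2 = 2⁻¹ by norm_num, Real.log_inv]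
  push_cast
  ring

lemma hasDeriv_psi (t : ℝ) :
    HasDerivAt (fun t : ℝ => (1+t^2)⁻¹) (-(2*t)/(1+t^2)^2) t := by
  have h : HasDerivAt (fun t : ℝ => 1+t^2) (2*t) t := by
    simpa using (hasDerivAt_pow 2 t).const_add 1
  exact h.inv (by positivity)

lemma psi_inj : InjOn (fun t : ℝ => (1+t^2)⁻¹) (Ioi 0) := by
  intro a ha b hb hab
  simp only at hab
  have ha' : (0:ℝ) < 1+a^2 := by positivity
  have hb' : (0:ℝ) < 1+b^2 := by positivity
  have h2 : (1:ℝ)+a^2 = 1+b^2 := by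
    field_simp at hab; linarith
  have ha0 := mem_Ioi.mp ha
  have hb0 := mem_Ioi.mp hb
  have hle : a ≤ b := by nlinarith
  have hge : b ≤ a := by nlinarith
  linarith

lemma psi_img : (fun t : ℝ => (1+t^2)⁻¹) '' (Ioi 0) = Ioo 0 1 := by
  apply Subset.antisymm
  · rintro y ⟨t, ht, rfl⟩
    have ht0 := mem_Ioi.mp ht
    constructor
    · positivity
    · have h1 : (1:ℝ) < 1+t^2 := by nlinarith
      exact inv_lt_one_of_one_lt₀ h1
  · rintro y ⟨hy0, hy1⟩
    have hyi : 1 < y⁻¹ := (one_lt_inv₀ hy0).mpr hy1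
    refine ⟨Real.sqrt (y⁻¹ - 1), mem_Ioi.mpr (Real.sqrt_pos.mpr (by linarith)), ?_⟩
    simp only
    rw [Real.sq_sqrt (by linarith), show 1 + (y⁻¹ - 1) = y⁻¹ by ring, inv_inv]

lemma integral_Ioi_one_add_sq_rpow {s : ℝ} (hs : 1 ≤ s) :
    ∫ t in Ioi (0:ℝ), (1+t^2) ^ (-s)
      = Real.Gamma (s-1/2) * Real.Gamma (1/2) / Real.Gamma s / 2 := by
  have key := integral_image_eq_integral_abs_deriv_smul measurableSet_Ioi
    (fun t _ => (hasDeriv_psi t).hasDerivWithinAt) psi_inj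
    (fun x => x ^ (s-1/2-1) * (1-x) ^ ((1/2:ℝ)-1) / 2)
  rw [psi_img] at key
  have hR : (∫ t in Ioi (0:ℝ), |(-(2*t)/(1+t^2)^2)| •
      ((1+t^2)⁻¹ ^ (s-1/2-1) * (1-(1+t^2)⁻¹) ^ ((1/2:ℝ)-1) / 2))
      = ∫ t in Ioi (0:ℝ), (1+t^2) ^ (-s) := by
    apply setIntegral_congr_fun measurableSet_Ioi
    intro t ht
    have h := aux_pt (s := s) (mem_Ioi.mp ht)
    simp only [smul_eq_mul]
    rw [← h]; ring
  rw [hR] at key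
  rw [← key]
  have h1 : ∫ x in Ioo (0:ℝ) 1, (x ^ (s-1/2-1) * (1-x) ^ ((1/2:ℝ)-1) / 2)
      = (∫ x in (0:ℝ)..1, x ^ (s-1/2-1) * (1-x) ^ ((1/2:ℝ)-1)) / 2 := by
    rw [intervalIntegral.integral_of_le (by norm_num : (0:ℝ) ≤ 1),
      ← integral_Ioc_eq_integral_Ioo, integral_div]
  have h2 := beta_real (u := s - 1/2) (v := (1/2:ℝ)) (by linarith) (by norm_num)
  rw [h1, h2, show s - 1/2 + 1/2 = s by ring]

lemma cont_one_add_sq_rpow {ν s : ℝ} (hν : 0 < ν) :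
    Continuous (fun t : ℝ => (1+t^2/ν) ^ (-s)) := by
  apply Continuous.rpow_const
  · continuity
  · intro t; left; positivity

lemma integrable_one_add_sq_rpow {s : ℝ} (hs : 1 ≤ s) :
    Integrable (fun t : ℝ => (1+t^2) ^ (-s)) := by
  apply integrable_inv_one_add_sq.mono
  · have := cont_one_add_sq_rpow (ν := 1) (s := s) one_pos
    simp only [div_one] at this
    exact this.aestronglyMeasurable
  · refine Eventually.of_forall (fun t => ?_)
    have h1 : (1:ℝ) ≤ 1+t^2 := by nlinarith
    rw [Real.norm_eq_abs, Real.norm_eq_abs, abs_of_pos (by positivity),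
      abs_of_pos (by positivity)]
    calc (1+t^2) ^ (-s) ≤ (1+t^2) ^ (-1:ℝ) :=
          Real.rpow_le_rpow_of_exponent_le h1 (by linarith)
      _ = (1+t^2)⁻¹ := Real.rpow_neg_one _

lemma integral_univ_one_add_sq_rpow {s : ℝ} (hs : 1 ≤ s) :
    ∫ t : ℝ, (1+t^2) ^ (-s) = Real.sqrt π * Real.Gamma (s-1/2) / Real.Gamma s := by
  have hint := integrable_one_add_sq_rpow hs
  have h1 : ∫ t in Ioi (0:ℝ), (1+t^2) ^ (-s) = ∫ t in Iic (0:ℝ), (1+t^2) ^ (-s) := by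
    rw [← neg_zero, ← integral_comp_neg_Ioi]
    simp only [neg_zero, neg_sq]
  have h2 := intervalIntegral.integral_Iic_add_Ioi (b := (0:ℝ))
    hint.integrableOn hint.integrableOn
  have h3 := integral_Ioi_one_add_sq_rpow hs
  rw [Real.Gamma_one_half_eq] at h3
  rw [← h2, h3, ← h1, h3]
  ring

lemma student_total {ν : ℝ} (hν : 1 ≤ ν) :
    ∫ t : ℝ, (Real.Gamma ((ν+1)/2) / (Real.sqrt (ν*π) * Real.Gamma (ν/2)))
        * (1+t^2/ν) ^ (-((ν+1)/2)) = 1 := by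
  have hν0 : (0:ℝ) < ν := by linarith
  have hs : (1:ℝ) ≤ (ν+1)/2 := by linarith
  have hsν : Real.sqrt ν ≠ 0 := (Real.sqrt_pos.mpr hν0).ne'
  have hscale : ∫ t : ℝ, (1+t^2/ν) ^ (-((ν+1)/2))
      = Real.sqrt ν * ∫ u : ℝ, (1+u^2) ^ (-((ν+1)/2)) := by
    have h := MeasureTheory.Measure.integral_comp_mul_left
      (fun u : ℝ => (1+u^2) ^ (-((ν+1)/2))) (Real.sqrt ν)⁻¹
    have heq : ∀ t : ℝ, (1+((Real.sqrt ν)⁻¹ * t)^2) ^ (-((ν+1)/2))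
        = (1+t^2/ν) ^ (-((ν+1)/2)) := by
      intro t
      congr 1
      rw [mul_pow, inv_pow, Real.sq_sqrt hν0.le]
      ring
    simp only [heq] at h
    rw [h, inv_inv, abs_of_pos (Real.sqrt_pos.mpr hν0), smul_eq_mul]
  rw [integral_const_mul, hscale, integral_univ_one_add_sq_rpow hs,
    show (ν+1)/2 - 1/2 = ν/2 by ring]
  have hΓν : Real.Gamma (ν/2) ≠ 0 := (Real.Gamma_pos_of_pos (by linarith)).ne'
  have hΓs : Real.Gamma ((ν+1)/2) ≠ 0 := (Real.Gamma_pos_of_pos (by linarith)).ne'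
  have hπ : Real.sqrt π ≠ 0 := (Real.sqrt_pos.mpr Real.pi_pos).ne'
  rw [Real.sqrt_mul hν0.le]
  field_simp

lemma normal_integrable : Integrable (fun t : ℝ => (2*π)^(-(1:ℝ)/2) * Real.exp (-t^2/2)) := by
  have h := (integrable_exp_neg_mul_sq (show (0:ℝ) < 1/2 by norm_num)).const_mul
    ((2*π)^(-(1:ℝ)/2))
  have e : (fun t : ℝ => (2*π)^(-(1:ℝ)/2) * Real.exp (-t^2/2))
      = fun t : ℝ => (2*π)^(-(1:ℝ)/2) * Real.exp (-(1/2)*t^2) := by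
    funext t; ring_nf
  rw [e]; exact h

lemma normal_total : ∫ t : ℝ, (2*π)^(-(1:ℝ)/2) * Real.exp (-t^2/2) = 1 := by
  simp_rw [show ∀ t:ℝ, -t^2/2 = -(1/2)*t^2 from fun t => by ring]
  rw [integral_const_mul, integral_gaussian, show π/(1/2:ℝ) = 2*π by ring,
    Real.sqrt_eq_rpow, ← Real.rpow_add (by positivity)]
  norm_num

lemma Gamma_add_half_le {x : ℝ} (hx : 0 < x) :
    Real.Gamma (x+1/2) ≤ Real.sqrt x * Real.Gamma x := by
  have hΓ : 0 < Real.Gamma x := Real.Gamma_pos_of_pos hx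
  have hΓh : 0 < Real.Gamma (x+1/2) := Real.Gamma_pos_of_pos (by linarith)
  have hc := Real.convexOn_log_Gamma.2 (mem_Ioi.mpr hx)
    (mem_Ioi.mpr (show (0:ℝ) < x+1 by linarith))
    (show (0:ℝ) ≤ 1/2 by norm_num) (show (0:ℝ) ≤ 1/2 by norm_num) (by norm_num)
  have e : (1/2:ℝ) • x + (1/2:ℝ) • (x+1) = x + 1/2 := by
    simp only [smul_eq_mul]; ring
  rw [e] at hc
  simp only [Function.comp, smul_eq_mul] at hc
  rw [Real.Gamma_add_one hx.ne', Real.log_mul hx.ne' hΓ.ne'] at hc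
  have h2 : Real.log (Real.Gamma (x+1/2)) ≤ Real.log (Real.sqrt x * Real.Gamma x) := by
    rw [Real.log_mul (Real.sqrt_pos.mpr hx).ne' hΓ.ne', Real.log_sqrt hx.le]
    linarith
  calc Real.Gamma (x+1/2) = Real.exp (Real.log (Real.Gamma (x+1/2))) :=
        (Real.exp_log hΓh).symm
    _ ≤ Real.exp (Real.log (Real.sqrt x * Real.Gamma x)) := Real.exp_le_exp.mpr h2
    _ = Real.sqrt x * Real.Gamma x := Real.exp_log (by positivity)

lemma c_le_B {ν : ℝ} (hν : 1 ≤ ν) :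
    Real.Gamma ((ν+1)/2) / (Real.sqrt (ν*π) * Real.Gamma (ν/2)) ≤ (2*π)^(-(1:ℝ)/2) := by
  have hν0 : (0:ℝ) < ν := by linarith
  have hΓ : 0 < Real.Gamma (ν/2) := Real.Gamma_pos_of_pos (by linarith)
  have hsq : 0 < Real.sqrt (ν*π) := Real.sqrt_pos.mpr (by positivity)
  rw [div_le_iff₀ (by positivity)]
  have h1 : Real.Gamma ((ν+1)/2) ≤ Real.sqrt (ν/2) * Real.Gamma (ν/2) := by
    have := Gamma_add_half_le (show (0:ℝ) < ν/2 by linarith)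
    rw [show ν/2 + 1/2 = (ν+1)/2 by ring] at this
    exact this
  have h2 : (2*π)^(-(1:ℝ)/2) * (Real.sqrt (ν*π) * Real.Gamma (ν/2))
      = Real.sqrt (ν/2) * Real.Gamma (ν/2) := by
    rw [show (-(1:ℝ)/2) = -(1/2:ℝ) by norm_num, Real.rpow_neg (by positivity),
      ← Real.sqrt_eq_rpow]
    rw [show ν/2 = ν*π/(2*π) by field_simp, Real.sqrt_div (by positivity) (2*π)]
    field_simp
  rw [h2]; exact h1

/-- Log of the ratio of the normal density to the student density. -/
noncomputable def hfun (ν t : ℝ) : ℝ :=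
  (Real.log ((2*π)^(-(1:ℝ)/2)) - t^2/2)
  - (Real.log (Real.Gamma ((ν+1)/2) / (Real.sqrt (ν*π) * Real.Gamma (ν/2)))
     + (-((ν+1)/2)) * Real.log (1+t^2/ν))

lemma hfun_hasDeriv {ν : ℝ} (hν : 1 ≤ ν) (t : ℝ) :
    HasDerivAt (hfun ν) (t*(1-t^2)/(ν+t^2)) t := by
  have hν0 : (0:ℝ) < ν := by linarith
  have hbase : (0:ℝ) < 1+t^2/ν := by positivity
  have h1 : HasDerivAt (fun t : ℝ => Real.log ((2*π)^(-(1:ℝ)/2)) - t^2/2) (-t) t := by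
    have := ((hasDerivAt_pow 2 t).div_const 2).const_sub (Real.log ((2*π)^(-(1:ℝ)/2)))
    simpa using this.congr_deriv (by push_cast; ring)
  have h2 : HasDerivAt (fun t : ℝ => 1+t^2/ν) (2*t/ν) t := by
    have := ((hasDerivAt_pow 2 t).div_const ν).const_add 1
    simpa using this.congr_deriv (by push_cast; ring)
  have h3 : HasDerivAt (fun t : ℝ =>
      Real.log (Real.Gamma ((ν+1)/2) / (Real.sqrt (ν*π) * Real.Gamma (ν/2)))
        + (-((ν+1)/2)) * Real.log (1+t^2/ν))
      ((-((ν+1)/2)) * ((2*t/ν)/(1+t^2/ν))) t :=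
    ((h2.log hbase.ne').const_mul _).const_add _
  have h4 := h1.sub h3
  have e : -t - (-((ν+1)/2)) * ((2*t/ν)/(1+t^2/ν)) = t*(1-t^2)/(ν+t^2) := by
    have hd : (1:ℝ)+t^2/ν = (ν+t^2)/ν := by field_simp
    rw [hd]
    field_simp
    ring
  rw [e] at h4
  exact h4

lemma hfun_continuous {ν : ℝ} (hν : 1 ≤ ν) : Continuous (hfun ν) := by
  have hν0 : (0:ℝ) < ν := by linarith
  unfold hfun
  apply Continuous.sub
  · continuity
  · apply Continuous.add continuous_const
    apply Continuous.mul continuous_const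
    apply Continuous.log (by continuity)
    intro t; positivity

lemma hfun_strictMonoOn {ν : ℝ} (hν : 1 ≤ ν) : StrictMonoOn (hfun ν) (Icc 0 1) := by
  apply strictMonoOn_of_deriv_pos (convex_Icc 0 1) (hfun_continuous hν).continuousOn
  intro t ht
  rw [interior_Icc, mem_Ioo] at ht
  rw [(hfun_hasDeriv hν t).deriv]
  have hν0 : (0:ℝ) < ν := by linarith
  have h1 : 0 < 1 - t^2 := by nlinarith [ht.1, ht.2]
  exact div_pos (mul_pos ht.1 h1) (by positivity)

lemma hfun_strictAntiOn {ν : ℝ} (hν : 1 ≤ ν) : StrictAntiOn (hfun ν) (Ici 1) := by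
  apply strictAntiOn_of_deriv_neg (convex_Ici 1) (hfun_continuous hν).continuousOn
  intro t ht
  rw [interior_Ici, mem_Ioi] at ht
  rw [(hfun_hasDeriv hν t).deriv]
  have hν0 : (0:ℝ) < ν := by linarith
  have ht0 : (0:ℝ) < t := by linarith
  have h1 : 1 - t^2 < 0 := by nlinarith
  have h2 : (0:ℝ) < ν + t^2 := by positivity
  exact div_neg_of_neg_of_pos (by nlinarith) h2

lemma hfun_zero_nonneg {ν : ℝ} (hν : 1 ≤ ν) : 0 ≤ hfun ν 0 := by
  have hν0 : (0:ℝ) < ν := by linarith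
  have hc : 0 < Real.Gamma ((ν+1)/2) / (Real.sqrt (ν*π) * Real.Gamma (ν/2)) := by
    have h1 : 0 < Real.Gamma ((ν+1)/2) := Real.Gamma_pos_of_pos (by linarith)
    have h2 : 0 < Real.Gamma (ν/2) := Real.Gamma_pos_of_pos (by linarith)
    have h3 : 0 < Real.sqrt (ν*π) := Real.sqrt_pos.mpr (by positivity)
    positivity
  have hlog := Real.log_le_log hc (c_le_B hν)
  unfold hfun
  norm_num [Real.log_one]
  linarith

lemma hfun_lt_iff {ν : ℝ} (hν : 1 ≤ ν) (t : ℝ) :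
    ((Real.Gamma ((ν+1)/2) / (Real.sqrt (ν*π) * Real.Gamma (ν/2)))
        * (1+t^2/ν) ^ (-((ν+1)/2)) < (2*π)^(-(1:ℝ)/2) * Real.exp (-t^2/2))
      ↔ 0 < hfun ν t := by
  have hν0 : (0:ℝ) < ν := by linarith
  have hbase : (0:ℝ) < 1+t^2/ν := by positivity
  have hc : 0 < Real.Gamma ((ν+1)/2) / (Real.sqrt (ν*π) * Real.Gamma (ν/2)) := by
    have h1 : 0 < Real.Gamma ((ν+1)/2) := Real.Gamma_pos_of_pos (by linarith)
    have h2 : 0 < Real.Gamma (ν/2) := Real.Gamma_pos_of_pos (by linarith)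
    have h3 : 0 < Real.sqrt (ν*π) := Real.sqrt_pos.mpr (by positivity)
    positivity
  have hB : (0:ℝ) < (2*π)^(-(1:ℝ)/2) := Real.rpow_pos_of_pos (by positivity) _
  have hf : (0:ℝ) < (Real.Gamma ((ν+1)/2) / (Real.sqrt (ν*π) * Real.Gamma (ν/2)))
      * (1+t^2/ν) ^ (-((ν+1)/2)) := by positivity
  have hφ : (0:ℝ) < (2*π)^(-(1:ℝ)/2) * Real.exp (-t^2/2) := by positivity
  rw [← Real.log_lt_log_iff hf]
  · unfold hfun
    rw [Real.log_mul hc.ne' (Real.rpow_pos_of_pos hbase _).ne',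
      Real.log_mul hB.ne' (Real.exp_pos _).ne', Real.log_exp,
      Real.log_rpow hbase]
    constructor <;> intro h <;> [linarith; linarith]
  · exact hφ
noncomputable def nPDF (t : ℝ) : ℝ := (2*π) ^ (-(1:ℝ)/2) * Real.exp (-t^2/2)

noncomputable def tPDF (ν t : ℝ) : ℝ :=
  (Real.Gamma ((ν+1)/2) / (Real.sqrt (ν*π) * Real.Gamma (ν/2))) * (1+t^2/ν) ^ (-((ν+1)/2))

lemma tPDF_c_pos {ν : ℝ} (hν : 1 ≤ ν) :
    0 < Real.Gamma ((ν+1)/2) / (Real.sqrt (ν*π) * Real.Gamma (ν/2)) := by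
  have hν0 : (0:ℝ) < ν := by linarith
  have h1 : 0 < Real.Gamma ((ν+1)/2) := Real.Gamma_pos_of_pos (by linarith)
  have h2 : 0 < Real.Gamma (ν/2) := Real.Gamma_pos_of_pos (by linarith)
  have h3 : 0 < Real.sqrt (ν*π) := Real.sqrt_pos.mpr (by positivity)
  positivity

lemma nPDF_pos (t : ℝ) : 0 < nPDF t := by
  unfold nPDF
  have : (0:ℝ) < 2*π := by positivity
  positivity

lemma tPDF_pos {ν : ℝ} (hν : 1 ≤ ν) (t : ℝ) : 0 < tPDF ν t := by
  have hν0 : (0:ℝ) < ν := by linarith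
  have hb : (0:ℝ) < 1+t^2/ν := by positivity
  exact mul_pos (tPDF_c_pos hν) (Real.rpow_pos_of_pos hb _)

lemma nPDF_integrable : Integrable nPDF := normal_integrable

lemma tPDF_integrable {ν : ℝ} (hν : 1 ≤ ν) : Integrable (tPDF ν) := by
  have hν0 : (0:ℝ) < ν := by linarith
  set c := Real.Gamma ((ν+1)/2) / (Real.sqrt (ν*π) * Real.Gamma (ν/2)) with hc
  have hc0 := tPDF_c_pos hν
  apply ((integrable_inv_one_add_sq.const_mul (c*ν)).mono
    ((continuous_const.mul (cont_one_add_sq_rpow (s := (ν+1)/2) hν0)).aestronglyMeasurable))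
  refine Eventually.of_forall (fun t => ?_)
  have hb1 : (1:ℝ) ≤ 1+t^2/ν := by
    have := div_nonneg (sq_nonneg t) hν0.le
    linarith
  have h2 : (1+t^2/ν) ^ (-((ν+1)/2)) ≤ (1+t^2/ν) ^ (-1:ℝ) :=
    Real.rpow_le_rpow_of_exponent_le hb1 (by linarith)
  have h3 : (1+t^2/ν) ^ (-1:ℝ) = ν/(ν+t^2) := by
    rw [Real.rpow_neg_one]
    rw [show (1:ℝ)+t^2/ν = (ν+t^2)/ν by field_simp]
    rw [inv_div]
  have h4 : ν/(ν+t^2) ≤ ν*(1+t^2)⁻¹ := by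
    rw [← div_eq_mul_inv]
    apply div_le_div_of_nonneg_left hν0.le (by positivity) (by nlinarith)
  have h5 : (0:ℝ) < 1+t^2/ν := by positivity
  have hTP := tPDF_pos hν t
  unfold tPDF at hTP
  simp only [Pi.mul_apply]
  rw [Real.norm_eq_abs, Real.norm_eq_abs, abs_of_pos hTP,
    abs_of_pos (by positivity : (0:ℝ) < c*ν*(1+t^2)⁻¹), ← hc]
  calc c * (1+t^2/ν) ^ (-((ν+1)/2)) ≤ c * (ν*(1+t^2)⁻¹) := by
        apply mul_le_mul_of_nonneg_left _ hc0.le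
        calc (1+t^2/ν) ^ (-((ν+1)/2)) ≤ (1+t^2/ν) ^ (-1:ℝ) := h2
          _ = ν/(ν+t^2) := h3
          _ ≤ ν*(1+t^2)⁻¹ := h4
    _ = c*ν*(1+t^2)⁻¹ := by ring

lemma nPDF_total : ∫ t : ℝ, nPDF t = 1 := normal_total

lemma tPDF_total {ν : ℝ} (hν : 1 ≤ ν) : ∫ t : ℝ, tPDF ν t = 1 := student_total hν

lemma nPDF_even (t : ℝ) : nPDF (-t) = nPDF t := by unfold nPDF; rw [neg_sq]

lemma tPDF_even (ν t : ℝ) : tPDF ν (-t) = tPDF ν t := by unfold tPDF; rw [neg_sq]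

lemma hfun_eq {ν : ℝ} (hν : 1 ≤ ν) (t : ℝ) :
    hfun ν t = Real.log (nPDF t) - Real.log (tPDF ν t) := by
  have hν0 : (0:ℝ) < ν := by linarith
  have hb : (0:ℝ) < 1+t^2/ν := by positivity
  unfold hfun nPDF tPDF
  rw [Real.log_mul (tPDF_c_pos hν).ne' (Real.rpow_pos_of_pos hb _).ne',
    Real.log_mul (by positivity : ((2:ℝ)*π) ^ (-(1:ℝ)/2) ≠ 0) (Real.exp_pos _).ne',
    Real.log_exp, Real.log_rpow hb]
  ring

lemma hfun_pos_iff {ν : ℝ} (hν : 1 ≤ ν) (t : ℝ) :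
    (tPDF ν t < nPDF t) ↔ 0 < hfun ν t := by
  rw [hfun_eq hν, sub_pos]
  exact (Real.log_lt_log_iff (tPDF_pos hν t) (nPDF_pos t)).symm

lemma hfun_neg_iff {ν : ℝ} (hν : 1 ≤ ν) (t : ℝ) :
    (nPDF t < tPDF ν t) ↔ hfun ν t < 0 := by
  rw [hfun_eq hν, sub_neg]
  exact (Real.log_lt_log_iff (nPDF_pos t) (tPDF_pos hν t)).symm

lemma dIoi_zero {ν : ℝ} (hν : 1 ≤ ν) :
    ∫ t in Ioi (0:ℝ), (nPDF t - tPDF ν t) = 0 := by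
  have hint : Integrable (fun t => nPDF t - tPDF ν t) :=
    nPDF_integrable.sub (tPDF_integrable hν)
  have htot : ∫ t : ℝ, (nPDF t - tPDF ν t) = 0 := by
    rw [integral_sub nPDF_integrable (tPDF_integrable hν), nPDF_total, tPDF_total hν]
    ring
  have hIic := even_split hint (fun t => by simp only [nPDF_even, tPDF_even ν])
  rw [htot] at hIic
  have hsum := intervalIntegral.integral_Iic_add_Ioi (b := (0:ℝ))
    hint.integrableOn hint.integrableOn
  rw [htot, hIic] at hsum
  linarith

lemma hfun_pos_on_Ioc {ν : ℝ} (hν : 1 ≤ ν) {t : ℝ} (ht0 : 0 < t) (ht1 : t ≤ 1) :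
    0 < hfun ν t := by
  have h0m : (0:ℝ) ∈ Icc (0:ℝ) 1 := ⟨le_refl 0, by norm_num⟩
  have htm : t ∈ Icc (0:ℝ) 1 := ⟨ht0.le, ht1⟩
  have := hfun_strictMonoOn hν h0m htm ht0
  have h0 := hfun_zero_nonneg hν
  linarith

lemma exists_neg {ν : ℝ} (hν : 1 ≤ ν) : ∃ u : ℝ, 1 < u ∧ hfun ν u < 0 := by
  by_contra hcon
  push_neg at hcon
  have hnn : ∀ t ∈ Ioi (0:ℝ), 0 ≤ nPDF t - tPDF ν t := by
    intro t ht
    rcases le_or_gt t 1 with h|h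
    · have := (hfun_pos_iff hν t).mpr (hfun_pos_on_Ioc hν (mem_Ioi.mp ht) h)
      linarith
    · have h2 := hcon t h
      have h3 : ¬ (nPDF t < tPDF ν t) := by
        rw [hfun_neg_iff hν]; linarith
      linarith [not_lt.mp h3]
  have hint : IntegrableOn (fun t => nPDF t - tPDF ν t) (Ioi 0) :=
    (nPDF_integrable.sub (tPDF_integrable hν)).integrableOn
  have hpos : 0 < ∫ t in Ioi (0:ℝ), (nPDF t - tPDF ν t) := by
    rw [setIntegral_pos_iff_support_of_nonneg_ae
      ((ae_restrict_iff' measurableSet_Ioi).mpr (Eventually.of_forall hnn)) hint]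
    have hsub : Ioo (0:ℝ) 1 ⊆
        Function.support (fun t => nPDF t - tPDF ν t) ∩ Ioi 0 := by
      intro t ht
      have hd : 0 < nPDF t - tPDF ν t := by
        have := (hfun_pos_iff hν t).mpr (hfun_pos_on_Ioc hν ht.1 ht.2.le)
        linarith
      exact ⟨hd.ne', mem_Ioi.mpr ht.1⟩
    calc (0:ENNReal) < volume (Ioo (0:ℝ) 1) := by rw [Real.volume_Ioo]; norm_num
      _ ≤ _ := measure_mono hsub
  rw [dIoi_zero hν] at hpos
  exact lt_irrefl _ hpos

lemma exists_crossing {ν : ℝ} (hν : 1 ≤ ν) : ∃ b : ℝ, 1 < b ∧ hfun ν b = 0 := by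
  obtain ⟨u, hu1, hu⟩ := exists_neg hν
  have h1pos : 0 < hfun ν 1 := hfun_pos_on_Ioc hν one_pos le_rfl
  have hiv := intermediate_value_Icc' hu1.le ((hfun_continuous hν).continuousOn)
  obtain ⟨b, hbmem, hb0⟩ := hiv (show (0:ℝ) ∈ Icc (hfun ν u) (hfun ν 1) from ⟨hu.le, h1pos.le⟩)
  refine ⟨b, ?_, hb0⟩
  rcases eq_or_lt_of_le hbmem.1 with he|h
  · exfalso; rw [he] at h1pos; rw [hb0] at h1pos; exact lt_irrefl _ h1pos
  · exact h

lemma key_lt {ν x : ℝ} (hν : 1 ≤ ν) (hx : 0 < x) : studentCDF ν x < stdNormalCDF x := by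
  obtain ⟨b, hb1, hb0⟩ := exists_crossing hν
  have hintn := nPDF_integrable
  have hintt := tPDF_integrable hν
  have hΦdef : stdNormalCDF = fun x => ∫ t in Iic x, nPDF t := rfl
  have hFdef : studentCDF ν = fun x => ∫ t in Iic x, tPDF ν t := rfl
  have dpos : ∀ t : ℝ, 0 < t → t < b → tPDF ν t < nPDF t := by
    intro t ht0 htb
    apply (hfun_pos_iff hν t).mpr
    rcases le_or_gt t 1 with h|h
    · exact hfun_pos_on_Ioc hν ht0 h
    · have := hfun_strictAntiOn hν (mem_Ici.mpr h.le)
        (mem_Ici.mpr (by linarith : (1:ℝ) ≤ b)) htb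
      rw [hb0] at this
      exact this
  show (∫ t in Iic x, tPDF ν t) < ∫ t in Iic x, nPDF t
  have hΦ0 : (∫ t in Iic (0:ℝ), nPDF t) = 1/2 := by
    rw [even_split hintn nPDF_even, nPDF_total]
  have hF0 : (∫ t in Iic (0:ℝ), tPDF ν t) = 1/2 := by
    rw [even_split hintt (tPDF_even ν), tPDF_total hν]
  rcases le_or_gt x b with hxb|hbx
  · have hsubn := cdf_sub hintn 0 x
    have hsubt := cdf_sub hintt 0 x
    have hd : ∫ t in (0:ℝ)..x, (nPDF t - tPDF ν t)
        = (∫ t in (0:ℝ)..x, nPDF t) - ∫ t in (0:ℝ)..x, tPDF ν t :=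
      intervalIntegral.integral_sub hintn.intervalIntegrable hintt.intervalIntegrable
    have hii : IntervalIntegrable (fun t => nPDF t - tPDF ν t) volume 0 x :=
      (hintn.sub hintt).intervalIntegrable
    have hpos : 0 < ∫ t in (0:ℝ)..x, (nPDF t - tPDF ν t) := by
      apply intervalIntegral.intervalIntegral_pos_of_pos_on hii
        (fun t ht => by
          have := dpos t ht.1 (lt_of_lt_of_le ht.2 hxb)
          linarith) hx
    linarith
  · have h1n := intervalIntegral.integral_Iic_add_Ioi (b := x)
      hintn.integrableOn hintn.integrableOn
    have h1t := intervalIntegral.integral_Iic_add_Ioi (b := x)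
      hintt.integrableOn hintt.integrableOn
    rw [nPDF_total] at h1n
    rw [tPDF_total hν] at h1t
    have dneg : ∀ t : ℝ, x < t → nPDF t < tPDF ν t := by
      intro t htx
      apply (hfun_neg_iff hν t).mpr
      have := hfun_strictAntiOn hν (mem_Ici.mpr hb1.le)
        (mem_Ici.mpr (by linarith : (1:ℝ) ≤ t)) (by linarith : b < t)
      rw [hb0] at this
      exact this
    have hsplit : ∫ t in Ioi x, (tPDF ν t - nPDF t)
        = (∫ t in Ioi x, tPDF ν t) - ∫ t in Ioi x, nPDF t :=
      integral_sub hintt.integrableOn hintn.integrableOn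
    have hae : 0 ≤ᵐ[volume.restrict (Ioi x)] (fun t => tPDF ν t - nPDF t) :=
      (ae_restrict_iff' measurableSet_Ioi).mpr (Eventually.of_forall
        (fun t ht => by
          have := dneg t (mem_Ioi.mp ht)
          simp only [Pi.zero_apply]
          linarith))
    have hio : IntegrableOn (fun t => tPDF ν t - nPDF t) (Ioi x) volume :=
      (hintt.sub hintn).integrableOn
    have hpos : 0 < ∫ t in Ioi x, (tPDF ν t - nPDF t) := by
      rw [setIntegral_pos_iff_support_of_nonneg_ae hae hio]
      have hsub : Ioo x (x+1) ⊆
          Function.support (fun t => tPDF ν t - nPDF t) ∩ Ioi x := by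
        intro t ht
        have hd := dneg t ht.1
        exact ⟨by simp only [Function.mem_support]; intro hz; linarith,
          mem_Ioi.mpr ht.1⟩
      calc (0:ENNReal) < volume (Ioo x (x+1)) := by rw [Real.volume_Ioo]; norm_num
        _ ≤ _ := measure_mono hsub
    linarith

end Aux

open MeasureTheory in
/-- For every `ν ≥ 1` and `q ∈ (1/2, 1)`, the standard normal quantile is strictly smaller
than the Student t quantile with `ν` degrees of freedom. -/
theorem zQuantile_lt_tQuantile (ν q : ℝ) (hν : 1 ≤ ν) (hq : q ∈ Set.Ioo (1/2 : ℝ) 1) :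
    zQuantile q < tQuantile ν q := by
  obtain ⟨hq1, hq2⟩ := hq
  have hintn := nPDF_integrable
  have hintt := tPDF_integrable hν
  have hΦ0 : (∫ t in Iic (0:ℝ), nPDF t) = 1/2 := by
    rw [even_split hintn nPDF_even, nPDF_total]
  have hF0 : (∫ t in Iic (0:ℝ), tPDF ν t) = 1/2 := by
    rw [even_split hintt (tPDF_even ν), tPDF_total hν]
  have hzex : ∃ z, stdNormalCDF z = q := by
    have := cdf_exists (q := q) hintn (cdf_continuous hintn)
      (by rw [hΦ0]; linarith) (by rw [nPDF_total]; exact hq2)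
    exact this
  have htex : ∃ z, studentCDF ν z = q := by
    have := cdf_exists (q := q) hintt (cdf_continuous hintt)
      (by rw [hF0]; linarith) (by rw [tPDF_total hν]; exact hq2)
    exact this
  have hz : stdNormalCDF (zQuantile q) = q := Function.invFun_eq hzex
  have ht : studentCDF ν (tQuantile ν q) = q := Function.invFun_eq htex
  have hmonoΦ : StrictMono stdNormalCDF := cdf_strictMono hintn nPDF_pos
  have hmonoF : StrictMono (studentCDF ν) := cdf_strictMono hintt (tPDF_pos hν)
  have htqpos : 0 < tQuantile ν q := by
    apply hmonoF.lt_iff_lt.mp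
    show studentCDF ν 0 < studentCDF ν (tQuantile ν q)
    rw [ht]
    show (∫ t in Iic (0:ℝ), tPDF ν t) < q
    rw [hF0]; exact hq1
  have hkey := key_lt hν htqpos
  apply hmonoΦ.lt_iff_lt.mp
  rw [hz]
  exact lt_of_le_of_lt (le_of_eq ht.symm) hkey
end

section
/- For every real ν ≥ 1 and every real x > 0, the Student t cumulative distribution function with ν degrees of freedom is strictly below the standard normal cumulative distribution function at x: F_ν(x) < Φ(x). Equivalently, the Student t distribution assigns strictly larger probability than the standard normal to the tail (x, ∞) for every x > 0. -/
open Real Set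

section AuxStudent
open Real Set MeasureTheory


lemma studentKernel_integrable {ν : ℝ} (hν : 1 ≤ ν) :
    Integrable (fun t : ℝ => (1 + t ^ 2 / ν) ^ (-((ν + 1) / 2))) := by
  have hν0 : 0 < ν := lt_of_lt_of_le one_pos hν
  have hcont : Continuous (fun t : ℝ => (1 + t ^ 2 / ν) ^ (-((ν + 1) / 2))) := by
    apply Continuous.rpow_const
    · exact continuous_const.add ((continuous_pow 2).div_const ν)
    · intro t
      left
      positivity
  refine (integrable_inv_one_add_sq.const_mul ν).mono' hcont.aestronglyMeasurable ?_
  filter_upwards with t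
  have h1 : (1:ℝ) ≤ 1 + t ^ 2 / ν := le_add_of_nonneg_right (by positivity)
  have h0 : (0:ℝ) < 1 + t ^ 2 / ν := by positivity
  rw [Real.norm_eq_abs, abs_of_nonneg (Real.rpow_nonneg (by positivity) _)]
  calc (1 + t ^ 2 / ν) ^ (-((ν + 1) / 2)) ≤ (1 + t ^ 2 / ν) ^ (-1 : ℝ) :=
        Real.rpow_le_rpow_of_exponent_le h1 (by linarith)
    _ = (1 + t ^ 2 / ν)⁻¹ := Real.rpow_neg_one _
    _ ≤ ν * (1 + t ^ 2)⁻¹ := by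
        rw [show ν * (1 + t ^ 2)⁻¹ = ((1 + t ^ 2) / ν)⁻¹ by field_simp]
        apply inv_anti₀ (by positivity)
        rw [div_le_iff₀ hν0]
        have hc : t ^ 2 / ν * ν = t ^ 2 := div_mul_cancel₀ _ (ne_of_gt hν0)
        nlinarith [hc]

lemma integral_studentKernel {ν : ℝ} (hν : 1 ≤ ν) :
    ∫ t : ℝ, (1 + t ^ 2 / ν) ^ (-((ν + 1) / 2)) =
      Real.sqrt (ν * π) * Real.Gamma (ν / 2) / Real.Gamma ((ν + 1) / 2) := by
  have hν0 : 0 < ν := lt_of_lt_of_le one_pos hν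
  set p : ℝ := (ν + 1) / 2 with hpdef
  have hp1 : 1 ≤ p := by rw [hpdef]; linarith
  have hp0 : 0 < p := lt_of_lt_of_le one_pos hp1
  have hp2 : 0 < p - 1/2 := by rw [hpdef]; linarith
  have hΓp : 0 < Real.Gamma p := Real.Gamma_pos_of_pos hp0
  -- relation between the two kernels
  have eq1 : ∀ t : ℝ, ((ν + t ^ 2) ^ (-p) : ℝ) = ν ^ (-p) * (1 + t ^ 2 / ν) ^ (-p) := by
    intro t
    have h1 : (1 + t ^ 2 / ν) = (ν + t ^ 2) / ν := by field_simp
    rw [h1, Real.div_rpow (by positivity) hν0.le, Real.rpow_neg hν0.le]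
    field_simp
  have hJint : Integrable (fun t : ℝ => (ν + t ^ 2) ^ (-p)) := by
    have := (studentKernel_integrable hν).const_mul (ν ^ (-p))
    exact this.congr (by filter_upwards with t using (eq1 t).symm)
  set J : ℝ := ∫ t : ℝ, (ν + t ^ 2) ^ (-p) with hJdef
  have hJnn : 0 ≤ J := integral_nonneg fun t => Real.rpow_nonneg (by positivity) _
  -- the two-variable kernel
  set F : ℝ → ℝ → ℝ := fun t s => s ^ (p - 1) * Real.exp (-((ν + t ^ 2) * s)) with hFdef
  have hFnn : ∀ t s, 0 < s → 0 ≤ F t s := fun t s hs => by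
    rw [hFdef]; positivity
  have hFmeas : Measurable (Function.uncurry F) := by
    apply Measurable.mul
    · exact measurable_snd.pow measurable_const
    · exact (((measurable_const.add (measurable_fst.pow measurable_const)).mul
        measurable_snd).neg).exp
  have hFint : ∀ t : ℝ, IntegrableOn (fun s => F t s) (Ioi 0) := by
    intro t
    have hr : 0 < ν + t ^ 2 := by positivity
    have := integrableOn_rpow_mul_exp_neg_mul_rpow
      (show (-1:ℝ) < p - 1 by linarith) (zero_lt_one' ℝ) hr
    refine this.congr_fun (fun s hs => ?_) measurableSet_Ioi
    rw [hFdef]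
    simp only [Real.rpow_one]
    ring_nf
  have hinner1 : ∀ t : ℝ, (∫ s in Ioi 0, F t s) = (ν + t ^ 2) ^ (-p) * Real.Gamma p := by
    intro t
    have hr : 0 < ν + t ^ 2 := by positivity
    have := integral_rpow_mul_exp_neg_mul_Ioi hp0 hr
    rw [hFdef]
    simp only []
    rw [show (∫ s in Ioi 0, s ^ (p - 1) * Real.exp (-((ν + t ^ 2) * s)))
        = ∫ s in Ioi 0, s ^ (p - 1) * Real.exp (-((ν + t ^ 2) * s)) from rfl, this,
      one_div, Real.inv_rpow hr.le, ← Real.rpow_neg hr.le]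
  -- Tonelli
  have swap : (∫⁻ t : ℝ, ∫⁻ s in Ioi (0:ℝ), ENNReal.ofReal (F t s)) =
      ∫⁻ s in Ioi (0:ℝ), ∫⁻ t : ℝ, ENNReal.ofReal (F t s) :=
    MeasureTheory.lintegral_lintegral_swap (hFmeas.ennreal_ofReal.aemeasurable)
  -- LHS of Tonelli
  have hGint : Integrable (fun t : ℝ => Real.Gamma p * (ν + t ^ 2) ^ (-p)) :=
    hJint.const_mul _
  have LHS : (∫⁻ t : ℝ, ∫⁻ s in Ioi (0:ℝ), ENNReal.ofReal (F t s)) =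
      ENNReal.ofReal (Real.Gamma p * J) := by
    have step1 : ∀ t : ℝ, (∫⁻ s in Ioi (0:ℝ), ENNReal.ofReal (F t s)) =
        ENNReal.ofReal (Real.Gamma p * (ν + t ^ 2) ^ (-p)) := by
      intro t
      rw [← MeasureTheory.ofReal_integral_eq_lintegral_ofReal (hFint t)]
      · rw [hinner1 t, mul_comm]
      · filter_upwards [ae_restrict_mem measurableSet_Ioi] with s hs
        exact hFnn t s hs
    rw [lintegral_congr step1,
      ← MeasureTheory.ofReal_integral_eq_lintegral_ofReal hGint
        (by filter_upwards with t; positivity)]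
    rw [MeasureTheory.integral_const_mul]
  -- RHS of Tonelli
  have hWint : IntegrableOn (fun s : ℝ => Real.sqrt π * (s ^ ((p - 1/2) - 1) * Real.exp (-(ν * s))))
      (Ioi 0) := by
    have h1 := integrableOn_rpow_mul_exp_neg_mul_rpow
      (show (-1:ℝ) < (p - 1/2) - 1 by linarith) (zero_lt_one' ℝ) hν0
    have h2 : IntegrableOn
        (fun s : ℝ => Real.sqrt π * (s ^ ((p - 1/2) - 1) * Real.exp (-ν * s ^ (1:ℝ)))) (Ioi 0) :=
      h1.const_mul (Real.sqrt π)
    refine h2.congr_fun (fun s hs => ?_) measurableSet_Ioi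
    simp only [Real.rpow_one]
    ring_nf
  have RHS : (∫⁻ s in Ioi (0:ℝ), ∫⁻ t : ℝ, ENNReal.ofReal (F t s)) =
      ENNReal.ofReal (Real.sqrt π * ((1/ν) ^ (p - 1/2) * Real.Gamma (p - 1/2))) := by
    have step2 : ∀ s ∈ Ioi (0:ℝ), (∫⁻ t : ℝ, ENNReal.ofReal (F t s)) =
        ENNReal.ofReal (Real.sqrt π * (s ^ ((p - 1/2) - 1) * Real.exp (-(ν * s)))) := by
      intro s hs
      rw [mem_Ioi] at hs
      have hFs : ∀ t : ℝ, F t s = (s ^ (p - 1) * Real.exp (-(ν * s))) * Real.exp (-s * t ^ 2) := by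
        intro t
        rw [hFdef]
        simp only []
        rw [mul_assoc, ← Real.exp_add]
        ring_nf
      have hgint : Integrable (fun t : ℝ =>
          (s ^ (p - 1) * Real.exp (-(ν * s))) * Real.exp (-s * t ^ 2)) :=
        (integrable_exp_neg_mul_sq hs).const_mul _
      simp_rw [hFs]
      rw [← MeasureTheory.ofReal_integral_eq_lintegral_ofReal hgint
        (by filter_upwards with t; positivity)]
      rw [MeasureTheory.integral_const_mul, integral_gaussian]
      congr 1
      rw [Real.sqrt_div pi_nonneg, Real.sqrt_eq_rpow s,
        show (p - 1/2) - 1 = (p - 1) - 1/2 by ring, Real.rpow_sub hs (p - 1) (1/2)]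
      ring
    have hWnn : 0 ≤ᵐ[volume.restrict (Ioi (0:ℝ))]
        fun s : ℝ => Real.sqrt π * (s ^ ((p - 1/2) - 1) * Real.exp (-(ν * s))) := by
      filter_upwards [ae_restrict_mem measurableSet_Ioi] with s hs
      have hs' : (0:ℝ) < s := hs
      positivity
    rw [setLIntegral_congr_fun measurableSet_Ioi step2,
      ← MeasureTheory.ofReal_integral_eq_lintegral_ofReal hWint hWnn,
      MeasureTheory.integral_const_mul, integral_rpow_mul_exp_neg_mul_Ioi hp2 hν0]
  -- conclude the value of J
  have hkey : Real.Gamma p * J = Real.sqrt π * ((1/ν) ^ (p - 1/2) * Real.Gamma (p - 1/2)) := by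
    have h := LHS.symm.trans (swap.trans RHS)
    rw [ENNReal.ofReal_eq_ofReal_iff (mul_nonneg hΓp.le hJnn)
      (mul_nonneg (Real.sqrt_nonneg _) (mul_nonneg (Real.rpow_nonneg (by positivity) _)
        (Real.Gamma_pos_of_pos hp2).le))] at h
    exact h
  have hhalf : p - 1/2 = ν / 2 := by rw [hpdef]; ring
  have hJval : J = Real.sqrt π * ((1/ν) ^ (p - 1/2) * Real.Gamma (ν/2)) / Real.Gamma p := by
    rw [eq_div_iff hΓp.ne', ← hhalf]
    linarith [hkey]
  have eq2 : ∀ t : ℝ, ((1 + t ^ 2 / ν) ^ (-p) : ℝ) = ν ^ p * (ν + t ^ 2) ^ (-p) := by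
    intro t
    rw [eq1 t, ← mul_assoc, ← Real.rpow_add hν0, add_neg_cancel, Real.rpow_zero, one_mul]
  have hpow : ν ^ p * (1/ν) ^ (p - 1/2) = Real.sqrt ν := by
    rw [one_div, Real.inv_rpow hν0.le, ← Real.rpow_neg hν0.le, ← Real.rpow_add hν0,
      show p + -(p - 1/2) = 1/2 by ring, Real.sqrt_eq_rpow]
  calc ∫ t : ℝ, ((1 + t ^ 2 / ν) ^ (-p) : ℝ)
      = ν ^ p * J := by
        simp_rw [eq2]
        rw [hJdef, MeasureTheory.integral_const_mul]
    _ = Real.sqrt (ν * π) * Real.Gamma (ν / 2) / Real.Gamma p := by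
        rw [hJval, Real.sqrt_mul hν0.le, mul_div_assoc']
        congr 1
        linear_combination (Real.sqrt π * Real.Gamma (ν/2)) * hpow

lemma studentDensity_integral {ν : ℝ} (hν : 1 ≤ ν) :
    ∫ t : ℝ, (Real.Gamma ((ν + 1) / 2) / (Real.sqrt (ν * π) * Real.Gamma (ν / 2))) *
      (1 + t ^ 2 / ν) ^ (-((ν + 1) / 2)) = 1 := by
  have hν0 : 0 < ν := lt_of_lt_of_le one_pos hν
  rw [MeasureTheory.integral_const_mul, integral_studentKernel hν]
  have h1 : 0 < Real.sqrt (ν * π) := Real.sqrt_pos.mpr (by positivity)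
  have h2 : 0 < Real.Gamma (ν / 2) := Real.Gamma_pos_of_pos (by linarith)
  have h3 : 0 < Real.Gamma ((ν + 1) / 2) := Real.Gamma_pos_of_pos (by linarith)
  field_simp

lemma normalDensity_integral : ∫ t : ℝ, ((2 * π) ^ (-(1:ℝ)/2) : ℝ) * Real.exp (-t ^ 2 / 2) = 1 := by
  have h2π : (0:ℝ) < 2 * π := by positivity
  simp_rw [show ∀ t : ℝ, -t ^ 2 / 2 = -(1/2) * t ^ 2 from fun t => by ring]
  rw [MeasureTheory.integral_const_mul, integral_gaussian,
    show π / (1/2 : ℝ) = 2 * π by ring,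
    show (-(1:ℝ)/2) = -(1/2 : ℝ) by norm_num, Real.rpow_neg h2π.le, ← Real.sqrt_eq_rpow]
  exact inv_mul_cancel₀ (ne_of_gt (Real.sqrt_pos.mpr h2π))

lemma integral_Iic_zero_even {f : ℝ → ℝ} (hf : MeasureTheory.Integrable f)
    (heven : ∀ t, f (-t) = f t) :
    ∫ t in Iic (0:ℝ), f t = (∫ t : ℝ, f t) / 2 ∧
    ∫ t in Ioi (0:ℝ), f t = (∫ t : ℝ, f t) / 2 := by
  have h1 : ∫ t in Iic (0:ℝ), f t = ∫ t in Ioi (0:ℝ), f t := by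
    have h := integral_comp_neg_Iic (0:ℝ) f
    rw [neg_zero] at h
    simp only [heven] at h
    exact h
  have h2 := intervalIntegral.integral_Iic_add_Ioi (b := (0:ℝ)) (μ := MeasureTheory.volume)
    hf.integrableOn hf.integrableOn
  constructor <;> linarith

lemma H_deriv {ν : ℝ} (hν0 : 0 < ν) (t : ℝ) :
    HasDerivAt (fun u : ℝ => ((ν + 1)/2) * Real.log (1 + u ^ 2 / ν) - u ^ 2 / 2)
      (t * (1 - t ^ 2) / (ν + t ^ 2)) t := by
  have hb : (0:ℝ) < 1 + t ^ 2 / ν := by positivity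
  have h1 : HasDerivAt (fun u : ℝ => 1 + u ^ 2 / ν) (2 * t / ν) t := by
    have := ((hasDerivAt_pow 2 t).div_const ν).const_add 1
    simpa using this
  have h2 := (h1.log (ne_of_gt hb)).const_mul ((ν + 1)/2)
  have h3 : HasDerivAt (fun u : ℝ => u ^ 2 / 2) t t := by
    have := (hasDerivAt_pow 2 t).div_const 2
    simpa using this
  have h4 := h2.sub h3
  refine h4.congr_deriv ?_
  have hd : ν + t ^ 2 > 0 := by positivity
  field_simp
  ring

lemma H_mono {ν : ℝ} (hν0 : 0 < ν) :
    StrictMonoOn (fun u : ℝ => ((ν + 1)/2) * Real.log (1 + u ^ 2 / ν) - u ^ 2 / 2)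
      (Icc 0 1) := by
  apply strictMonoOn_of_deriv_pos (convex_Icc 0 1)
  · exact Continuous.continuousOn (continuous_iff_continuousAt.mpr fun t =>
      (H_deriv hν0 t).continuousAt)
  · intro t ht
    rw [interior_Icc] at ht
    rw [(H_deriv hν0 t).deriv]
    exact div_pos (mul_pos ht.1 (by nlinarith [ht.2, ht.1])) (by positivity)

lemma H_anti {ν : ℝ} (hν0 : 0 < ν) :
    StrictAntiOn (fun u : ℝ => ((ν + 1)/2) * Real.log (1 + u ^ 2 / ν) - u ^ 2 / 2)
      (Ici 1) := by
  apply strictAntiOn_of_deriv_neg (convex_Ici 1)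
  · exact Continuous.continuousOn (continuous_iff_continuousAt.mpr fun t =>
      (H_deriv hν0 t).continuousAt)
  · intro t ht
    rw [interior_Ici] at ht
    rw [(H_deriv hν0 t).deriv]
    have ht1 : (1:ℝ) < t := ht
    exact div_neg_of_neg_of_pos (mul_neg_of_pos_of_neg (by linarith) (by nlinarith))
      (by positivity)

lemma gautschi {ν : ℝ} (hν0 : 0 < ν) :
    Real.Gamma ((ν + 1)/2) ≤ Real.sqrt (ν/2) * Real.Gamma (ν/2) := by
  have hx : (0:ℝ) < ν/2 := by linarith
  have hy : (0:ℝ) < ν/2 + 1 := by linarith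
  have hm : (0:ℝ) < (ν + 1)/2 := by linarith
  have hΓx := Real.Gamma_pos_of_pos hx
  have hΓy := Real.Gamma_pos_of_pos hy
  have hΓm := Real.Gamma_pos_of_pos hm
  have hc := Real.convexOn_log_Gamma.2 (mem_Ioi.mpr hx) (mem_Ioi.mpr hy)
      (by norm_num : (0:ℝ) ≤ 1/2) (by norm_num : (0:ℝ) ≤ 1/2) (by norm_num)
  simp only [Function.comp_apply, smul_eq_mul] at hc
  rw [show (1/2 : ℝ) * (ν/2) + (1/2 : ℝ) * (ν/2 + 1) = (ν + 1)/2 by ring] at hc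
  have hsq : Real.Gamma ((ν + 1)/2) ^ 2 ≤ Real.Gamma (ν/2) * Real.Gamma (ν/2 + 1) := by
    have h2 : Real.log (Real.Gamma ((ν + 1)/2)) + Real.log (Real.Gamma ((ν + 1)/2))
        ≤ Real.log (Real.Gamma (ν/2)) + Real.log (Real.Gamma (ν/2 + 1)) := by linarith
    have h3 := Real.exp_le_exp.mpr h2
    rwa [Real.exp_add, Real.exp_add, Real.exp_log hΓm, Real.exp_log hΓx, Real.exp_log hΓy,
      ← sq] at h3
  rw [Real.Gamma_add_one (ne_of_gt hx)] at hsq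
  have h4 : Real.Gamma ((ν + 1)/2) ≤ Real.sqrt (ν/2 * Real.Gamma (ν/2) ^ 2) := by
    rw [Real.le_sqrt hΓm.le (by positivity)]
    nlinarith [hsq]
  rwa [Real.sqrt_mul (by linarith : (0:ℝ) ≤ ν/2), Real.sqrt_sq hΓx.le] at h4

lemma density_lt_iff {ν : ℝ} (hν0 : 0 < ν) (C₁ C₂ : ℝ) (hC1 : 0 < C₁) (hC2 : 0 < C₂) (t : ℝ) :
    (C₂ * (1 + t ^ 2 / ν) ^ (-((ν + 1) / 2)) < C₁ * Real.exp (-t ^ 2 / 2) ↔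
      Real.log C₂ - Real.log C₁ < ((ν + 1)/2) * Real.log (1 + t ^ 2 / ν) - t ^ 2 / 2) ∧
    (C₁ * Real.exp (-t ^ 2 / 2) < C₂ * (1 + t ^ 2 / ν) ^ (-((ν + 1) / 2)) ↔
      ((ν + 1)/2) * Real.log (1 + t ^ 2 / ν) - t ^ 2 / 2 < Real.log C₂ - Real.log C₁) := by
  have hb : (0:ℝ) < 1 + t ^ 2 / ν := by positivity
  have hφ : C₁ * Real.exp (-t ^ 2 / 2) = Real.exp (Real.log C₁ + -t ^ 2 / 2) := by
    rw [Real.exp_add, Real.exp_log hC1]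
  have hf : C₂ * (1 + t ^ 2 / ν) ^ (-((ν + 1) / 2)) =
      Real.exp (Real.log C₂ + Real.log (1 + t ^ 2 / ν) * (-((ν + 1) / 2))) := by
    rw [Real.exp_add, Real.exp_log hC2, Real.rpow_def_of_pos hb]
  rw [hφ, hf, Real.exp_lt_exp, Real.exp_lt_exp]
  constructor <;> constructor <;> intro h <;> nlinarith [h]

end AuxStudent

open MeasureTheory in
/-- For every `ν ≥ 1` and `x > 0`, the Student t CDF with `ν` degrees of freedom is
strictly below the standard normal CDF at `x`. -/
theorem studentCDF_lt_stdNormalCDF (ν x : ℝ) (hν : 1 ≤ ν) (hx : 0 < x) :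
    studentCDF ν x < stdNormalCDF x := by
  have hν0 : 0 < ν := lt_of_lt_of_le one_pos hν
  set C₁ : ℝ := (2 * π) ^ (-(1:ℝ)/2) with hC1def
  set C₂ : ℝ := Real.Gamma ((ν + 1) / 2) / (Real.sqrt (ν * π) * Real.Gamma (ν / 2)) with hC2def
  set φd : ℝ → ℝ := fun t => C₁ * Real.exp (-t ^ 2 / 2) with hφdef
  set fd : ℝ → ℝ := fun t => C₂ * (1 + t ^ 2 / ν) ^ (-((ν + 1) / 2)) with hfdef
  have h2π : (0:ℝ) < 2 * π := by positivity
  have hC1 : 0 < C₁ := Real.rpow_pos_of_pos h2π _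
  have hΓν2 : 0 < Real.Gamma (ν / 2) := Real.Gamma_pos_of_pos (by linarith)
  have hΓp : 0 < Real.Gamma ((ν + 1) / 2) := Real.Gamma_pos_of_pos (by linarith)
  have hsνπ : 0 < Real.sqrt (ν * π) := Real.sqrt_pos.mpr (by positivity)
  have hC2 : 0 < C₂ := by rw [hC2def]; positivity
  -- integrability
  have hφint : MeasureTheory.Integrable φd := by
    have h := (integrable_exp_neg_mul_sq (by norm_num : (0:ℝ) < 1/2)).const_mul C₁
    have he : φd = fun t : ℝ => C₁ * Real.exp (-(1/2) * t ^ 2) := by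
      funext t
      simp only [hφdef]
      congr 1
      ring
    rw [he]
    exact h
  have hfint : MeasureTheory.Integrable fd := (studentKernel_integrable hν).const_mul C₂
  -- evenness
  have hφeven : ∀ t, φd (-t) = φd t := fun t => by rw [hφdef]; simp [neg_sq]
  have hfeven : ∀ t, fd (-t) = fd t := fun t => by rw [hfdef]; simp [neg_sq]
  -- total mass
  have hφtot : ∫ t : ℝ, φd t = 1 := normalDensity_integral
  have hftot : ∫ t : ℝ, fd t = 1 := studentDensity_integral hν
  obtain ⟨hφIic, hφIoi⟩ := integral_Iic_zero_even hφint hφeven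
  obtain ⟨hfIic, hfIoi⟩ := integral_Iic_zero_even hfint hfeven
  rw [hφtot] at hφIic hφIoi
  rw [hftot] at hfIic hfIoi
  -- CDFs as integrals
  have hcdfφ : stdNormalCDF x = ∫ t in Iic x, φd t := rfl
  have hcdff : studentCDF ν x = ∫ t in Iic x, fd t := rfl
  -- splitting of Iic x
  have hsplit : ∀ (h : ℝ → ℝ), MeasureTheory.Integrable h →
      ∫ t in Iic x, h t = (∫ t in Iic (0:ℝ), h t) + ∫ t in Ioc 0 x, h t := by
    intro h hint
    rw [← Set.Iic_union_Ioc_eq_Iic hx.le,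
      MeasureTheory.setIntegral_union (Set.Iic_disjoint_Ioc le_rfl) measurableSet_Ioc
        hint.integrableOn hint.integrableOn]
  -- K ≤ 0 (Gautschi)
  have hK0 : Real.log C₂ - Real.log C₁ ≤ 0 := by
    have hg := gautschi hν0
    have hs : Real.sqrt (ν/2) * Real.sqrt (2 * π) = Real.sqrt (ν * π) := by
      rw [← Real.sqrt_mul (by positivity), show ν/2 * (2 * π) = ν * π by ring]
    have hC1' : C₁ = (Real.sqrt (2 * π))⁻¹ := by
      rw [hC1def, show (-(1:ℝ)/2) = -(1/2 : ℝ) by norm_num, Real.rpow_neg h2π.le,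
        ← Real.sqrt_eq_rpow]
    have hle : C₂ ≤ C₁ := by
      rw [hC2def, hC1', div_le_iff₀ (by positivity)]
      have h2 : (0:ℝ) < Real.sqrt (2 * π) := Real.sqrt_pos.mpr h2π
      calc Real.Gamma ((ν + 1)/2) ≤ Real.sqrt (ν/2) * Real.Gamma (ν/2) := hg
        _ = (Real.sqrt (2 * π))⁻¹ * (Real.sqrt (ν * π) * Real.Gamma (ν/2)) := by
            rw [← hs]; field_simp
    have := Real.log_le_log hC2 hle
    linarith
  have hH0 : ((ν + 1)/2) * Real.log (1 + (0:ℝ) ^ 2 / ν) - (0:ℝ) ^ 2 / 2 = 0 := by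
    norm_num
  have hsign := fun t => density_lt_iff hν0 C₁ C₂ hC1 hC2 t
  have hm := H_mono hν0
  have ha := H_anti hν0
  -- main case analysis
  rcases lt_or_ge (Real.log C₂ - Real.log C₁)
    (((ν + 1)/2) * Real.log (1 + x ^ 2 / ν) - x ^ 2 / 2) with hcase | hcase
  · -- the integrand is positive on (0, x)
    have hpos : ∀ t ∈ Ioo (0:ℝ) x, 0 < φd t - fd t := by
      intro t ht
      have hKH : Real.log C₂ - Real.log C₁ <
          ((ν + 1)/2) * Real.log (1 + t ^ 2 / ν) - t ^ 2 / 2 := by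
        rcases le_or_gt t 1 with ht1 | ht1
        · have h01 : (0:ℝ) ∈ Icc (0:ℝ) 1 := by norm_num
          have ht01 : t ∈ Icc (0:ℝ) 1 := ⟨ht.1.le, ht1⟩
          have := hm h01 ht01 ht.1
          simp only at this
          linarith
        · have hxi : x ∈ Ici (1:ℝ) := le_of_lt (lt_trans ht1 ht.2)
          have hti : t ∈ Ici (1:ℝ) := ht1.le
          have := ha hti hxi ht.2
          simp only at this
          linarith
      have := (hsign t).1.mpr hKH
      rw [hφdef, hfdef]
      simp only
      linarith [this]
    have hii : IntervalIntegrable (fun t => φd t - fd t) MeasureTheory.volume 0 x :=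
      (hφint.sub hfint).intervalIntegrable
    have hpos2 := intervalIntegral.intervalIntegral_pos_of_pos_on hii hpos hx
    rw [intervalIntegral.integral_of_le hx.le] at hpos2
    have hsub : ∫ t in Ioc (0:ℝ) x, (φd t - fd t) =
        (∫ t in Ioc (0:ℝ) x, φd t) - ∫ t in Ioc (0:ℝ) x, fd t :=
      MeasureTheory.integral_sub hφint.integrableOn hfint.integrableOn
    rw [hcdfφ, hcdff, hsplit φd hφint, hsplit fd hfint]
    linarith
  · -- the crossing is before x : the integrand is negative on (x, ∞)
    have hx1 : 1 < x := by
      by_contra hle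
      push_neg at hle
      have h01 : (0:ℝ) ∈ Icc (0:ℝ) 1 := by norm_num
      have hx01 : x ∈ Icc (0:ℝ) 1 := ⟨hx.le, hle⟩
      have := hm h01 hx01 hx
      simp only at this
      linarith
    have hneg : ∀ t ∈ Ioi x, 0 < fd t - φd t := by
      intro t ht
      have hti : t ∈ Ici (1:ℝ) := le_of_lt (lt_trans hx1 ht)
      have := ha (le_of_lt hx1) hti ht
      simp only at this
      have h2 := (hsign t).2.mpr (by linarith)
      rw [hφdef, hfdef]
      simp only
      linarith [h2]
    have hTint : MeasureTheory.IntegrableOn (fun t => fd t - φd t) (Ioi x) :=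
      (hfint.sub hφint).integrableOn
    have hTnn : 0 ≤ᵐ[MeasureTheory.volume.restrict (Ioi x)] fun t => fd t - φd t := by
      filter_upwards [MeasureTheory.ae_restrict_mem measurableSet_Ioi] with t ht
      exact (hneg t ht).le
    have hTpos : 0 < ∫ t in Ioi x, (fd t - φd t) := by
      rw [MeasureTheory.setIntegral_pos_iff_support_of_nonneg_ae hTnn hTint]
      have hsub : Ioi x ⊆ Function.support (fun t => fd t - φd t) ∩ Ioi x :=
        fun t ht => ⟨(hneg t ht).ne', ht⟩
      refine lt_of_lt_of_le ?_ (measure_mono hsub)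
      rw [Real.volume_Ioi]
      simp
    have hsplit2 : ∀ (h : ℝ → ℝ), MeasureTheory.Integrable h →
        ∫ t in Ioi (0:ℝ), h t = (∫ t in Ioc (0:ℝ) x, h t) + ∫ t in Ioi x, h t := by
      intro h hint
      rw [← Set.Ioc_union_Ioi_eq_Ioi hx.le,
        MeasureTheory.setIntegral_union (Set.Ioc_disjoint_Ioi le_rfl) measurableSet_Ioi
          hint.integrableOn hint.integrableOn]
    have e1 := hsplit2 φd hφint
    have e2 := hsplit2 fd hfint
    have hdiff : ∫ t in Ioi x, (fd t - φd t) =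
        (∫ t in Ioi x, fd t) - ∫ t in Ioi x, φd t :=
      MeasureTheory.integral_sub hfint.integrableOn hφint.integrableOn
    rw [hcdfφ, hcdff, hsplit φd hφint, hsplit fd hfint]
    linarith
end

section
/- Let n, p be positive integers, X an n×p real matrix, W and D invertible n×n real diagonal matrices, y, μ, ξ ∈ ℝⁿ, β ∈ ℝᵖ, and φ > 0 a real number, and suppose XᵀWX is invertible. Define s_β = (1/φ) Xᵀ W D⁻¹ (y − μ), i_ββ = (1/φ) Xᵀ W X, the mean bias-reducing adjustment A* = XᵀW ξ, the first-order bias term b_β = −i_ββ⁻¹ A*, and the working variate z = Xβ + D⁻¹(y − μ). Then the quasi-Fisher scoring update for mean bias reduction equals an iteratively reweighted least squares update with working variate z + φξ: β + i_ββ⁻¹ s_β − b_β = (XᵀWX)⁻¹ XᵀW (z + φξ). -/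
open Matrix

/-- The quasi-Fisher scoring update for mean bias reduction equals an IWLS update with
adjusted working variate `z + φξ`: `β + i_ββ⁻¹ s_β - b_β = (XᵀWX)⁻¹ XᵀW (z + φξ)`,
where `b_β = -i_ββ⁻¹ A*` and `A* = XᵀWξ`. -/
theorem mean_br_quasi_fisher_eq_iwls (n p : ℕ) (hn : 0 < n) (hp : 0 < p)
    (X : Matrix (Fin n) (Fin p) ℝ) (W D : Matrix (Fin n) (Fin n) ℝ)
    (hWdiag : W.IsDiag) (hDdiag : D.IsDiag)
    (hW : IsUnit W.det) (hD : IsUnit D.det)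
    (y μ ξ : Fin n → ℝ) (β : Fin p → ℝ) (φ : ℝ) (hφ : 0 < φ)
    (hXWX : IsUnit (Xᵀ * W * X).det) :
    let sβ : Fin p → ℝ := (1 / φ) • (Xᵀ * W * D⁻¹).mulVec (y - μ)
    let iββ : Matrix (Fin p) (Fin p) ℝ := (1 / φ) • (Xᵀ * W * X)
    let Astar : Fin p → ℝ := (Xᵀ * W).mulVec ξ
    let bβ : Fin p → ℝ := -(iββ⁻¹.mulVec Astar)
    let z : Fin n → ℝ := X.mulVec β + D⁻¹.mulVec (y - μ)
    β + iββ⁻¹.mulVec sβ - bβ = (Xᵀ * W * X)⁻¹.mulVec ((Xᵀ * W).mulVec (z + φ • ξ)) := by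
  intro sβ iββ Astar bβ z
  have hφ' : φ ≠ 0 := ne_of_gt hφ
  have hinv : iββ⁻¹ = φ • (Xᵀ * W * X)⁻¹ := by
    apply Matrix.inv_eq_left_inv
    show (φ • (Xᵀ * W * X)⁻¹) * ((1/φ) • (Xᵀ * W * X)) = 1
    rw [Matrix.smul_mul, Matrix.mul_smul, smul_smul, mul_one_div, div_self hφ',
      one_smul, Matrix.nonsing_inv_mul _ hXWX]
  have hβ : (Xᵀ * W * X)⁻¹.mulVec ((Xᵀ * W * X).mulVec β) = β := by
    rw [Matrix.mulVec_mulVec, Matrix.nonsing_inv_mul _ hXWX, Matrix.one_mulVec]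
  show β + iββ⁻¹.mulVec sβ - bβ = _
  simp only [sβ, bβ, Astar, z, hinv, sub_neg_eq_add, Matrix.mulVec_add,
    Matrix.smul_mulVec, Matrix.smul_mul, Matrix.mulVec_smul, Matrix.mulVec_mulVec, smul_smul,
    one_div, inv_mul_cancel₀ hφ', one_smul]
  rw [Matrix.nonsing_inv_mul _ hXWX, Matrix.one_mulVec]
end

section
/- Let n, p be positive integers, X an n×p real matrix, W and D invertible n×n real diagonal matrices, y, μ, ξ ∈ ℝⁿ, β ∈ ℝᵖ, and φ > 0 a real number, and suppose XᵀWX is invertible. Define the working variate z = Xβ + D⁻¹(y − μ). Then β is a fixed point of the adjusted iteratively reweighted least squares map, i.e. (XᵀWX)⁻¹ XᵀW (z + φξ) = β, if and only if the mean bias-reducing adjusted score equation holds at β, i.e. (1/φ) Xᵀ W D⁻¹ (y − μ) + XᵀW ξ = 0. -/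
open Matrix

/-- `β` is a fixed point of the adjusted IWLS map, `(XᵀWX)⁻¹ XᵀW (z + φξ) = β`, if and
only if the mean bias-reducing adjusted score equation
`(1/φ) XᵀWD⁻¹(y - μ) + XᵀWξ = 0` holds at `β`. -/
theorem iwls_fixed_point_iff_adjusted_score (n p : ℕ) (hn : 0 < n) (hp : 0 < p)
    (X : Matrix (Fin n) (Fin p) ℝ) (W D : Matrix (Fin n) (Fin n) ℝ)
    (hWdiag : W.IsDiag) (hDdiag : D.IsDiag)
    (hW : IsUnit W.det) (hD : IsUnit D.det)
    (y μ ξ : Fin n → ℝ) (β : Fin p → ℝ) (φ : ℝ) (hφ : 0 < φ)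
    (hXWX : IsUnit (Xᵀ * W * X).det) :
    let z : Fin n → ℝ := X.mulVec β + D⁻¹.mulVec (y - μ)
    (Xᵀ * W * X)⁻¹.mulVec ((Xᵀ * W).mulVec (z + φ • ξ)) = β ↔
      (1 / φ) • (Xᵀ * W * D⁻¹).mulVec (y - μ) + (Xᵀ * W).mulVec ξ = 0 := by
  intro z
  set A := Xᵀ * W * X with hA
  have hφ' : φ ≠ 0 := ne_of_gt hφ
  constructor
  · intro h
    -- apply A to both sides
    have h2 : (Xᵀ * W).mulVec (z + φ • ξ) = A.mulVec β := by
      have := congrArg A.mulVec h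
      rwa [Matrix.mulVec_mulVec, Matrix.mul_nonsing_inv A hXWX,
        Matrix.one_mulVec] at this
    simp only [z, hA, Matrix.mulVec_add, Matrix.mulVec_smul, Matrix.mulVec_mulVec] at h2 ⊢
    have h3 : (Xᵀ * W * D⁻¹).mulVec (y - μ) + φ • (Xᵀ * W).mulVec ξ = 0 := by
      linear_combination (norm := module) h2
    have := congrArg (fun v => (1/φ) • v) h3
    simpa [smul_add, smul_smul, one_div, inv_mul_cancel₀ hφ'] using this
  · intro h
    have h3 : (Xᵀ * W * D⁻¹).mulVec (y - μ) + φ • (Xᵀ * W).mulVec ξ = 0 := by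
      have := congrArg (fun v => φ • v) h
      simpa [smul_add, smul_smul, one_div, mul_inv_cancel₀ hφ'] using this
    have h2 : (Xᵀ * W).mulVec (z + φ • ξ) = A.mulVec β := by
      simp only [z, hA, Matrix.mulVec_add, Matrix.mulVec_smul, Matrix.mulVec_mulVec] at h3 ⊢
      linear_combination (norm := module) h3
    rw [h2, Matrix.mulVec_mulVec, Matrix.nonsing_inv_mul A hXWX, Matrix.one_mulVec]
end
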